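/- arXiv:1312.4481 — 2 statements merged into one kernel-verified Lean document; each statement's English description precedes it below -/
import Mathlib

section
/- The smoothness indicator of h_l evaluates as ∫_{x_i}^{x_{i+1}} [Δx (h_l')² + Δx³ (h_l'')²] dx = (f_i - f_{i+1})² + (13/3)((f_{i+1}-f_i) - Δx f'_i)². -/
open MeasureTheory intervalIntegral

lemma quad_deriv (A B C : ℝ) (x : ℝ) :
    HasDerivAt (fun y : ℝ => A + B * y + C * y ^ 2) (B + C * (2 * x)) x := by
  have h := (((hasDerivAt_id x).const_mul B).const_add A).add
    ((hasDerivAt_pow 2 x).const_mul C)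
  simpa [mul_comm, Pi.add_def] using h

lemma quad_deriv_eq (A B C : ℝ) :
    deriv (fun y : ℝ => A + B * y + C * y ^ 2) = fun x => B + C * (2 * x) := by
  funext x
  exact (quad_deriv A B C x).deriv

lemma lin_deriv_eq (B C : ℝ) :
    deriv (fun x : ℝ => B + C * (2 * x)) = fun _ => 2 * C := by
  funext x
  have h := ((hasDerivAt_id x).const_mul (C * 2)).const_add B
  have h' : HasDerivAt (fun x : ℝ => B + C * (2 * x)) (2 * C) x := by
    simpa [mul_comm, mul_assoc, mul_left_comm] using h
  exact h'.deriv

lemma quad_int (a b p q r : ℝ) :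
    ∫ x in a..b, (p + q * x + r * x ^ 2)
      = p * (b - a) + q * ((b ^ 2 - a ^ 2) / 2) + r * ((b ^ 3 - a ^ 3) / 3) := by
  have h1 : IntervalIntegrable (fun _ : ℝ => p) volume a b := by apply Continuous.intervalIntegrable; continuity
  have h2 : IntervalIntegrable (fun x : ℝ => q * x) volume a b := by apply Continuous.intervalIntegrable; continuity
  have h3 : IntervalIntegrable (fun x : ℝ => r * x ^ 2) volume a b := by apply Continuous.intervalIntegrable; continuity
  rw [integral_add (h1.add h2) h3, integral_add h1 h2,
    intervalIntegral.integral_const, intervalIntegral.integral_const_mul, intervalIntegral.integral_const_mul, integral_id, integral_pow]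
  simp only [smul_eq_mul]
  push_cast
  ring

theorem stmt3 (Δx xi fi fi1 di : ℝ) (hΔx : 0 < Δx)
    (hl : ℝ → ℝ)
    (hhl : ∀ x, hl x = fi + (fi1 - fi) / Δx * (x - xi)
      + ((fi1 - fi) - Δx * di) / Δx ^ 2 * (x - xi) * (x - (xi + Δx))) :
    (∫ x in xi..(xi + Δx),
        (Δx * (deriv hl x) ^ 2 + Δx ^ 3 * (deriv (deriv hl) x) ^ 2))
      = (fi - fi1) ^ 2 + 13 / 3 * ((fi1 - fi) - Δx * di) ^ 2 := by
  set c1 := (fi1 - fi) / Δx with hc1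
  set c2 := ((fi1 - fi) - Δx * di) / Δx ^ 2 with hc2
  have hA : hl = fun x => (fi - c1 * xi + c2 * (xi * (xi + Δx)))
      + (c1 - c2 * (2 * xi + Δx)) * x + c2 * x ^ 2 := by
    funext x
    rw [hhl x]
    ring
  rw [hA, quad_deriv_eq]
  set B := c1 - c2 * (2 * xi + Δx) with hB
  rw [lin_deriv_eq]
  have hInt : (fun x => Δx * (B + c2 * (2 * x)) ^ 2 + Δx ^ 3 * (2 * c2) ^ 2)
      = fun x => (Δx * B ^ 2 + 4 * Δx ^ 3 * c2 ^ 2) + (4 * Δx * B * c2) * x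
        + (4 * Δx * c2 ^ 2) * x ^ 2 := by
    funext x; ring
  rw [hInt, quad_int]
  rw [hc1] at hB
  rw [hB, hc2]
  field_simp
  ring
end

section
/- The smoothness indicator of h_r evaluates as ∫_{x_i}^{x_{i+1}} [Δx (h_r')² + Δx³ (h_r'')²] dx = (f_i - f_{i+1})² + (13/3)(Δx f'_{i+1} - (f_{i+1}-f_i))². -/
open MeasureTheory intervalIntegral

theorem stmt4 (Δx xi fi fi1 di1 : ℝ) (hΔx : 0 < Δx)
    (hr : ℝ → ℝ)
    (hhr : ∀ x, hr x = fi + (fi1 - fi) / Δx * (x - xi)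
      + (Δx * di1 - (fi1 - fi)) / Δx ^ 2 * (x - xi) * (x - (xi + Δx))) :
    (∫ x in xi..(xi + Δx),
        (Δx * (deriv hr x) ^ 2 + Δx ^ 3 * (deriv (deriv hr) x) ^ 2))
      = (fi - fi1) ^ 2 + 13 / 3 * (Δx * di1 - (fi1 - fi)) ^ 2 := by
  have hne : Δx ≠ 0 := ne_of_gt hΔx
  set a := (fi1 - fi) / Δx with ha
  set c := (Δx * di1 - (fi1 - fi)) / Δx ^ 2 with hc
  have hfun : hr = fun x => fi + a * (x - xi) + c * (x - xi) * (x - (xi + Δx)) :=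
    funext hhr
  have hd1 : ∀ x : ℝ, HasDerivAt hr (a + c * (2 * x - 2 * xi - Δx)) x := by
    intro x
    rw [hfun]
    have h1 : HasDerivAt (fun x : ℝ => x - xi) 1 x := (hasDerivAt_id x).sub_const xi
    have h2 : HasDerivAt (fun x : ℝ => x - (xi + Δx)) 1 x :=
      (hasDerivAt_id x).sub_const (xi + Δx)
    have := ((h1.const_mul a).const_add fi).add ((h1.const_mul c).mul h2)
    exact this.congr_deriv (by ring)
  have hD1 : deriv hr = fun x => a + c * (2 * x - 2 * xi - Δx) :=
    funext fun x => (hd1 x).deriv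
  have hd2 : ∀ x : ℝ, HasDerivAt (deriv hr) (2 * c) x := by
    intro x
    rw [hD1]
    have h1 : HasDerivAt (fun x : ℝ => 2 * x - 2 * xi - Δx) 2 x := by
      simpa using (((hasDerivAt_id x).const_mul 2).sub_const (2 * xi)).sub_const Δx
    simpa [mul_comm] using (h1.const_mul c).const_add a
  have hD2 : deriv (deriv hr) = fun _ => 2 * c :=
    funext fun x => (hd2 x).deriv
  simp only [hD2, hD1]
  rw [show deriv (fun x => a + c * (2 * x - 2 * xi - Δx)) = fun _ => 2 * c from hD1 ▸ hD2]
  set F : ℝ → ℝ := fun x =>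
    Δx * (a ^ 2 * x + a * c * (2 * x - 2 * xi - Δx) ^ 2 / 2
      + c ^ 2 * (2 * x - 2 * xi - Δx) ^ 3 / 6) + Δx ^ 3 * (2 * c) ^ 2 * x with hF
  have hFd : ∀ x : ℝ,
      HasDerivAt F (Δx * (a + c * (2 * x - 2 * xi - Δx)) ^ 2 + Δx ^ 3 * (2 * c) ^ 2) x := by
    intro x
    have hu : HasDerivAt (fun x : ℝ => 2 * x - 2 * xi - Δx) 2 x := by
      simpa using (((hasDerivAt_id x).const_mul 2).sub_const (2 * xi)).sub_const Δx
    have h2 : HasDerivAt (fun x : ℝ => (2 * x - 2 * xi - Δx) ^ 2)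
        (2 * (2 * x - 2 * xi - Δx) ^ 1 * 2) x := hu.pow 2
    have h3 : HasDerivAt (fun x : ℝ => (2 * x - 2 * xi - Δx) ^ 3)
        (3 * (2 * x - 2 * xi - Δx) ^ 2 * 2) x := hu.pow 3
    have hid : HasDerivAt (fun x : ℝ => x) 1 x := hasDerivAt_id x
    have := (((hid.const_mul (a ^ 2)).add ((h2.const_mul (a * c)).div_const 2)).add
      ((h3.const_mul (c ^ 2)).div_const 6)).const_mul Δx |>.add
      (hid.const_mul (Δx ^ 3 * (2 * c) ^ 2))
    exact this.congr_deriv (by ring)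
  have hcont : Continuous fun x : ℝ =>
      Δx * (a + c * (2 * x - 2 * xi - Δx)) ^ 2 + Δx ^ 3 * (2 * c) ^ 2 := by
    continuity
  rw [integral_eq_sub_of_hasDerivAt (fun x _ => hFd x) (hcont.intervalIntegrable _ _)]
  rw [hF]
  rw [ha, hc]
  field_simp
  ring
end
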